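/- The generalized functions η₁ and η₂ are fixed by H = SO(1,1): fix λ ∈ ℝ and define η₁(x) = π^{−1/2}·(1−x²)^{−(1−iλ)/2} for |x| < 1 and η₂(x) = π^{−1/2}·(x²−1)^{−(1−iλ)/2} for |x| > 1 (principal complex powers of the positive real bases). Then for every t ∈ ℝ: (i) for every x with |x| < 1 one has cosh(t) − x·sinh(t) > 0, the point y = (x·cosh(t) − sinh(t))/(cosh(t) − x·sinh(t)) satisfies |y| < 1, and |cosh(t) − x·sinh(t)|^{−1+iλ} · η₁(y) = η₁(x); (ii) for every x with |x| > 1 and cosh(t) − x·sinh(t) ≠ 0, the point y = (x·cosh(t) − sinh(t))/(cosh(t) − x·sinh(t)) satisfies |y| > 1 and |cosh(t) − x·sinh(t)|^{−1+iλ} · η₂(y) = η₂(x). -/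

import Mathlib

open Real

/-- `η₁(x) = π^{-1/2}(1-x²)^{-(1-iλ)/2}` (meaningful for `|x| < 1`). -/
noncomputable def eta1 (lam : ℝ) (x : ℝ) : ℂ :=
  ((π ^ (-(1 / 2 : ℝ)) : ℝ) : ℂ) *
    ((1 - x ^ 2 : ℝ) : ℂ) ^ (-((1 : ℂ) - Complex.I * lam) / 2)

/-- `η₂(x) = π^{-1/2}(x²-1)^{-(1-iλ)/2}` (meaningful for `|x| > 1`). -/
noncomputable def eta2 (lam : ℝ) (x : ℝ) : ℂ :=
  ((π ^ (-(1 / 2 : ℝ)) : ℝ) : ℂ) *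
    ((x ^ 2 - 1 : ℝ) : ℂ) ^ (-((1 : ℂ) - Complex.I * lam) / 2)

/-- For `d ≠ 0`, `(|d| : ℂ)^(2α) = ((d^2 : ℝ) : ℂ)^α`. -/
lemma abs_cpow_two_mul (d : ℝ) (α : ℂ) :
    ((|d| : ℝ) : ℂ) ^ (2 * α) = ((d ^ 2 : ℝ) : ℂ) ^ α := by
  have h : (2 : ℂ) = ((2 : ℝ) : ℂ) := by norm_num
  rw [h, Complex.cpow_mul_ofReal_nonneg (abs_nonneg d)]
  congr 2
  rw [Real.rpow_two, sq_abs]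

/-- The key algebraic step: for `a ≥ 0`, `d ≠ 0`,
`(|d|:ℂ)^(2α) * ((a/d²:ℝ):ℂ)^α = ((a:ℝ):ℂ)^α`. -/
lemma key_step (a d : ℝ) (ha : 0 ≤ a) (hd : d ≠ 0) (α : ℂ) :
    ((|d| : ℝ) : ℂ) ^ (2 * α) * ((a / d ^ 2 : ℝ) : ℂ) ^ α = ((a : ℝ) : ℂ) ^ α := by
  have hd2 : (0 : ℝ) < d ^ 2 := by positivity
  have hsplit : ((a : ℝ) : ℂ) ^ α = ((a / d ^ 2 : ℝ) : ℂ) ^ α * ((d ^ 2 : ℝ) : ℂ) ^ α := by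
    rw [← Complex.mul_cpow_ofReal_nonneg (by positivity) hd2.le]
    have hd' : ((d : ℂ)) ^ 2 ≠ 0 := pow_ne_zero 2 (by exact_mod_cast hd)
    have hdc : (d : ℂ) ≠ 0 := by exact_mod_cast hd
    congr 2
    push_cast
    field_simp
  rw [abs_cpow_two_mul, hsplit]
  ring

/-- The generalized functions `η₁` and `η₂` are fixed by `H = SO(1,1)`, acting through the
spherical principal series formula with `h_t⁻¹ = [[cosh t, -sinh t],[-sinh t, cosh t]]`. -/
theorem eta_one_eta_two_H_fixed (lam : ℝ) :
    ∀ t : ℝ,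
      (∀ x : ℝ, |x| < 1 →
        0 < Real.cosh t - x * Real.sinh t ∧
        |(x * Real.cosh t - Real.sinh t) / (Real.cosh t - x * Real.sinh t)| < 1 ∧
        ((|Real.cosh t - x * Real.sinh t| : ℝ) : ℂ) ^ ((-1 : ℂ) + Complex.I * lam) *
            eta1 lam ((x * Real.cosh t - Real.sinh t) / (Real.cosh t - x * Real.sinh t)) =
          eta1 lam x) ∧
      (∀ x : ℝ, 1 < |x| → Real.cosh t - x * Real.sinh t ≠ 0 →
        1 < |(x * Real.cosh t - Real.sinh t) / (Real.cosh t - x * Real.sinh t)| ∧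
        ((|Real.cosh t - x * Real.sinh t| : ℝ) : ℂ) ^ ((-1 : ℂ) + Complex.I * lam) *
            eta2 lam ((x * Real.cosh t - Real.sinh t) / (Real.cosh t - x * Real.sinh t)) =
          eta2 lam x) := by
  intro t
  set c := Real.cosh t with hc
  set s := Real.sinh t with hs
  have hcs : c ^ 2 - s ^ 2 = 1 := Real.cosh_sq_sub_sinh_sq t
  have hcpos : 0 < c := Real.cosh_pos t
  have habs : |s| < c := by
    nlinarith [abs_nonneg s, sq_abs s]
  have hexp : (-1 : ℂ) + Complex.I * lam = 2 * (-((1 : ℂ) - Complex.I * lam) / 2) := by ring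
  constructor
  · intro x hx
    set d := c - x * s with hdd
    have hd : 0 < d := by
      have h1 : x * s ≤ |x| * |s| := by
        calc x * s ≤ |x * s| := le_abs_self _
        _ = |x| * |s| := abs_mul x s
      nlinarith [abs_nonneg x, abs_nonneg s]
    set y := (x * c - s) / d with hy
    have hkey : 1 - y ^ 2 = (1 - x ^ 2) / d ^ 2 := by
      rw [hy]
      field_simp
      nlinarith [hcs]
    have hy2 : y ^ 2 < 1 := by
      have : 0 < (1 - x ^ 2) / d ^ 2 := by
        apply div_pos
        · nlinarith [sq_abs x, abs_nonneg x]
        · positivity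
      nlinarith
    have hylt : |y| < 1 := by
      nlinarith [sq_abs y, abs_nonneg y]
    refine ⟨hd, hylt, ?_⟩
    rw [eta1, eta1, hkey, hexp]
    rw [mul_comm (((π ^ (-(1 / 2 : ℝ)) : ℝ) : ℂ)) _, ← mul_assoc,
      key_step (1 - x ^ 2) d (by nlinarith [sq_abs x, abs_nonneg x]) (ne_of_gt hd)]
    ring
  · intro x hx hd0
    set d := c - x * s with hdd
    set y := (x * c - s) / d with hy
    have hkey : y ^ 2 - 1 = (x ^ 2 - 1) / d ^ 2 := by
      rw [hy]
      field_simp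
      linear_combination (x ^ 2 - 1) * hcs
    have hx2 : 1 < x ^ 2 := by nlinarith [sq_abs x, abs_nonneg x]
    have hy2 : 1 < y ^ 2 := by
      have : 0 < (x ^ 2 - 1) / d ^ 2 := by
        apply div_pos (by linarith) (by positivity)
      nlinarith
    have hygt : 1 < |y| := by
      nlinarith [sq_abs y, abs_nonneg y]
    refine ⟨hygt, ?_⟩
    rw [eta2, eta2, hkey, hexp]
    rw [mul_comm (((π ^ (-(1 / 2 : ℝ)) : ℝ) : ℂ)) _, ← mul_assoc,
      key_step (x ^ 2 - 1) d (by linarith) hd0]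
    ring
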